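/- arXiv:1705.08097 — 2 statements merged into one kernel-verified Lean document; each statement's English description precedes it below -/
import Mathlib

section
/- For every vector w in R^N and every symmetric traceless N×N real matrix H, one has ((N−1)/2)·λ_max[w⊗w − H] ≥ (1/2)‖H‖, where ‖H‖ denotes the operator norm (largest absolute value of an eigenvalue) of H. -/
open Matrix BigOperators

lemma abs_le_one_of_unit {N : ℕ} {ξ : Fin N → ℝ} (hξ : (∑ i, ξ i ^ 2) = 1) (i : Fin N) :
    |ξ i| ≤ 1 := by
  have h1 : ξ i ^ 2 ≤ 1 := by
    rw [← hξ]
    exact Finset.single_le_sum (fun j _ => sq_nonneg (ξ j)) (Finset.mem_univ i)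
  nlinarith [abs_nonneg (ξ i), sq_abs (ξ i)]

lemma ray_bddAbove {N : ℕ} (A : Matrix (Fin N) (Fin N) ℝ) :
    BddAbove {x : ℝ | ∃ ξ : Fin N → ℝ, (∑ i, ξ i ^ 2) = 1 ∧ x = ξ ⬝ᵥ A.mulVec ξ} := by
  refine ⟨∑ i, ∑ j, |A i j|, ?_⟩
  rintro x ⟨ξ, hξ, rfl⟩
  have habs := abs_le_one_of_unit hξ
  calc ξ ⬝ᵥ A.mulVec ξ = ∑ i, ∑ j, ξ i * (A i j * ξ j) := by
        simp [dotProduct, Matrix.mulVec, Finset.mul_sum]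
    _ ≤ ∑ i, ∑ j, |A i j| := by
        refine Finset.sum_le_sum fun i _ => Finset.sum_le_sum fun j _ => ?_
        calc ξ i * (A i j * ξ j) ≤ |ξ i * (A i j * ξ j)| := le_abs_self _
          _ = |ξ i| * |A i j| * |ξ j| := by rw [abs_mul, abs_mul]; ring
          _ ≤ 1 * |A i j| * 1 :=
              mul_le_mul (mul_le_mul (habs i) le_rfl (abs_nonneg _) zero_le_one) (habs j)
                (abs_nonneg _) (by positivity)
          _ = |A i j| := by ring

lemma sum_rayleigh_onb {N : ℕ} (A : Matrix (Fin N) (Fin N) ℝ)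
    (b : OrthonormalBasis (Fin N) ℝ (EuclideanSpace ℝ (Fin N))) :
    ∑ i, (fun j => b i j) ⬝ᵥ A.mulVec (fun j => b i j) = A.trace := by
  set B : Matrix (Fin N) (Fin N) ℝ := Matrix.of fun i j => b i j with hB
  have horth := b.orthonormal
  rw [orthonormal_iff_ite] at horth
  have hBBt : B * Bᵀ = 1 := by
    ext i j
    have h := horth i j
    simp only [PiLp.inner_apply, RCLike.inner_apply, conj_trivial] at h
    simp [Matrix.mul_apply, B, Matrix.one_apply, h]
    rw [← h]; exact Finset.sum_congr rfl fun _ _ => mul_comm _ _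
  have hBtB : Bᵀ * B = 1 := mul_eq_one_comm.mp hBBt
  have htr : (B * A * Bᵀ).trace = A.trace := by
    rw [Matrix.trace_mul_cycle, hBtB, Matrix.one_mul]
  rw [← htr, Matrix.trace]
  refine Finset.sum_congr rfl fun i _ => ?_
  simp only [Matrix.diag_apply, Matrix.mul_apply, dotProduct, Matrix.mulVec,
    Matrix.transpose_apply, Finset.sum_mul, B, Matrix.of_apply]
  rw [Finset.sum_comm]
  refine Finset.sum_congr rfl fun j _ => ?_
  simp [dotProduct, Finset.mul_sum]
  ring_nf

/-- The largest eigenvalue of a symmetric matrix, via the variational (Rayleigh) characterization. -/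
noncomputable def lamMax {N : ℕ} (A : Matrix (Fin N) (Fin N) ℝ) : ℝ :=
  sSup {x : ℝ | ∃ ξ : Fin N → ℝ, (∑ i, ξ i ^ 2) = 1 ∧ x = ξ ⬝ᵥ A.mulVec ξ}

/-- The operator norm of a symmetric matrix: the largest absolute value of an eigenvalue. -/
noncomputable def symOpNorm {N : ℕ} (A : Matrix (Fin N) (Fin N) ℝ) : ℝ :=
  max (lamMax A) (lamMax (-A))

theorem stmt1 (N : ℕ) (hN : 2 ≤ N) (w : Fin N → ℝ) (H : Matrix (Fin N) (Fin N) ℝ)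
    (hsymm : H.IsSymm) (htr : H.trace = 0) :
    ((N : ℝ) - 1) / 2 * lamMax (vecMulVec w w - H) ≥ 1 / 2 * symOpNorm H := by
  haveI : NeZero N := ⟨by omega⟩
  set A := vecMulVec w w - H with hA
  have hbddA := ray_bddAbove A
  have hsingle : ∀ i : Fin N, (∑ j, (Pi.single i 1 : Fin N → ℝ) j ^ 2) = 1 := by
    intro i
    rw [Finset.sum_eq_single i] <;> simp +contextual [Pi.single_apply]
  have hdiag : ∀ (M : Matrix (Fin N) (Fin N) ℝ) (i : Fin N),
      (Pi.single i 1 : Fin N → ℝ) ⬝ᵥ M.mulVec (Pi.single i 1) = M i i := by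
    intro M i
    simp [dotProduct, Matrix.mulVec, Pi.single_apply]
  have hvv : ∀ ξ : Fin N → ℝ, ξ ⬝ᵥ (vecMulVec w w).mulVec ξ = (w ⬝ᵥ ξ) ^ 2 := by
    intro ξ
    have hrow : (vecMulVec w w).mulVec ξ = (w ⬝ᵥ ξ) • w := by
      ext i
      simp only [Matrix.mulVec, dotProduct, vecMulVec_apply, Pi.smul_apply, smul_eq_mul,
        Finset.sum_mul]
      exact Finset.sum_congr rfl fun k _ => by ring
    rw [hrow, dotProduct_smul, smul_eq_mul, dotProduct_comm ξ w, sq]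
  have htrH : ∑ i, H i i = 0 := htr
  have hmem : ∀ {M : Matrix (Fin N) (Fin N) ℝ} {ξ : Fin N → ℝ}, (∑ i, ξ i ^ 2) = 1 →
      ξ ⬝ᵥ M.mulVec ξ ≤ lamMax M := fun {M ξ} h => le_csSup (ray_bddAbove M) ⟨ξ, h, rfl⟩
  -- lamMax A ≥ 0
  have hA0 : 0 ≤ lamMax A := by
    have hex : ∃ i, 0 ≤ A i i := by
      by_contra h
      push_neg at h
      have hlt : ∑ i, A i i < 0 :=
        Finset.sum_neg (fun i _ => h i) ⟨0, Finset.mem_univ _⟩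
      have heq : ∑ i, A i i = ∑ i, w i ^ 2 := by
        simp [hA, Matrix.sub_apply, vecMulVec_apply, Finset.sum_sub_distrib, htrH, sq]
      have : 0 ≤ ∑ i, w i ^ 2 := Finset.sum_nonneg fun i _ => sq_nonneg _
      linarith
    obtain ⟨i, hi⟩ := hex
    calc (0:ℝ) ≤ A i i := hi
      _ ≤ lamMax A := by rw [← hdiag A i]; exact hmem (hsingle i)
  have hne : ∀ M : Matrix (Fin N) (Fin N) ℝ,
      Set.Nonempty {x : ℝ | ∃ ξ : Fin N → ℝ, (∑ i, ξ i ^ 2) = 1 ∧ x = ξ ⬝ᵥ M.mulVec ξ} :=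
    fun M => ⟨_, ⟨Pi.single 0 1, hsingle 0, rfl⟩⟩
  -- lamMax (-H) ≤ lamMax A
  have h1 : lamMax (-H) ≤ lamMax A := by
    refine csSup_le (hne _) ?_
    rintro x ⟨ξ, hξ, rfl⟩
    have key : ξ ⬝ᵥ A.mulVec ξ = (w ⬝ᵥ ξ) ^ 2 + ξ ⬝ᵥ (-H).mulVec ξ := by
      simp only [hA, Matrix.sub_mulVec, dotProduct_sub, Matrix.neg_mulVec, dotProduct_neg,
        hvv ξ]
      ring
    have hle : ξ ⬝ᵥ (-H).mulVec ξ ≤ ξ ⬝ᵥ A.mulVec ξ := by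
      nlinarith [sq_nonneg (w ⬝ᵥ ξ)]
    exact hle.trans (hmem hξ)
  -- lamMax H ≤ (N-1) * lamMax A
  have h2 : lamMax H ≤ ((N : ℝ) - 1) * lamMax A := by
    refine csSup_le (hne _) ?_
    rintro x ⟨ξ, hξ, rfl⟩
    set ξ' : EuclideanSpace ℝ (Fin N) := WithLp.toLp 2 ξ with hξ'
    have hinner : (inner ℝ ξ' ξ' : ℝ) = 1 := by
      simp only [PiLp.inner_apply, RCLike.inner_apply, conj_trivial]
      simpa [sq] using hξ
    have hnorm : ‖ξ'‖ = 1 := by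
      have h3 : ‖ξ'‖ ^ 2 = 1 := by rw [← real_inner_self_eq_norm_sq]; exact hinner
      have h4 := norm_nonneg ξ'
      have h5 : (‖ξ'‖ - 1) * (‖ξ'‖ + 1) = 0 := by nlinarith
      rcases mul_eq_zero.mp h5 with h | h
      · linarith
      · linarith
    have horthsing : Orthonormal ℝ (({(0 : Fin N)} : Set (Fin N)).restrict
        (fun _ : Fin N => ξ')) := by
      refine ⟨fun i => ?_, fun i j hij => absurd ?_ hij⟩
      · simpa [Set.restrict] using hnorm
      · ext
        have hi := i.2; have hj := j.2
        simp only [Set.mem_singleton_iff] at hi hj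
        rw [hi, hj]
    obtain ⟨b, hb⟩ := horthsing.exists_orthonormalBasis_extension_of_card_eq (by simp)
    have hb0 : b 0 = ξ' := hb 0 rfl
    have horth := b.orthonormal
    rw [orthonormal_iff_ite] at horth
    have hbunit : ∀ i, (∑ j, (b i j) ^ 2) = 1 := by
      intro i
      have h := horth i i
      simp only [PiLp.inner_apply, RCLike.inner_apply, conj_trivial, if_pos rfl] at h
      simpa [sq] using h
    set q : Fin N → ℝ := fun i => (fun j => b i j) ⬝ᵥ H.mulVec (fun j => b i j) with hq
    have hsumq : ∑ i, q i = 0 := by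
      simp only [hq]
      rw [sum_rayleigh_onb H b, htr]
    have hr : ∀ i, -(q i) ≤ lamMax A := by
      intro i
      have key : (fun j => b i j) ⬝ᵥ A.mulVec (fun j => b i j)
          = (w ⬝ᵥ fun j => b i j) ^ 2 - q i := by
        simp only [hq, hA, Matrix.sub_mulVec, dotProduct_sub, hvv]
      have hle : -(q i) ≤ (fun j => b i j) ⬝ᵥ A.mulVec (fun j => b i j) := by
        rw [key]; nlinarith [sq_nonneg (w ⬝ᵥ fun j => b i j)]
      exact hle.trans (hmem (hbunit i))
    have hq0 : q 0 = ξ ⬝ᵥ H.mulVec ξ := by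
      simp [hq, hb0, hξ']
    have hsplit : q 0 + ∑ i ∈ Finset.univ.erase 0, q i = 0 := by
      rw [Finset.add_sum_erase _ q (Finset.mem_univ 0)]
      exact hsumq
    have hbound : ∑ i ∈ Finset.univ.erase 0, -(q i)
        ≤ ∑ _i ∈ Finset.univ.erase (0 : Fin N), lamMax A :=
      Finset.sum_le_sum fun i _ => hr i
    have hcard : ((Finset.univ.erase (0 : Fin N)).card : ℝ) = (N : ℝ) - 1 := by
      rw [Finset.card_erase_of_mem (Finset.mem_univ _), Finset.card_univ, Fintype.card_fin,
        Nat.cast_sub (by omega : 1 ≤ N), Nat.cast_one]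
    calc ξ ⬝ᵥ H.mulVec ξ = q 0 := hq0.symm
      _ = ∑ i ∈ Finset.univ.erase 0, -(q i) := by
          rw [Finset.sum_neg_distrib]; linarith
      _ ≤ ∑ _i ∈ Finset.univ.erase (0 : Fin N), lamMax A := hbound
      _ = ((N : ℝ) - 1) * lamMax A := by
          rw [Finset.sum_const, nsmul_eq_mul, hcard]
  have hN1 : (1 : ℝ) ≤ (N : ℝ) - 1 := by
    have : (2 : ℝ) ≤ (N : ℝ) := by exact_mod_cast hN
    linarith
  have hfin : symOpNorm H ≤ ((N : ℝ) - 1) * lamMax A := by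
    rw [symOpNorm]
    refine max_le h2 (h1.trans ?_)
    nlinarith
  linarith
end

section
/- For any e > 0, the set S[e] = { (w,H) : w ∈ R^N, H symmetric traceless, (N/2)·λ_max[w⊗w − H] < e } is a convex, open, and bounded subset of R^N × R^{N×N}_{0,sym}. -/
open Matrix BigOperators

/-- The subspace of symmetric traceless real `N × N` matrices. -/
def tracelessSym (N : ℕ) : Submodule ℝ (Matrix (Fin N) (Fin N) ℝ) where
  carrier := {H | H.IsSymm ∧ H.trace = 0}
  add_mem' := by
    rintro a b ⟨ha1, ha2⟩ ⟨hb1, hb2⟩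
    exact ⟨ha1.add hb1, by simp [Matrix.trace_add, ha2, hb2]⟩
  zero_mem' := by
    constructor
    · simp [Matrix.IsSymm]
    · simp
  smul_mem' := by
    rintro c a ⟨ha1, ha2⟩
    constructor
    · simpa [Matrix.IsSymm, Matrix.transpose_smul] using congrArg (c • ·) ha1
    · simp [Matrix.trace_smul, ha2]

namespace LamMaxAux

variable {N : ℕ}

lemma abs_le_one_of_unit {ξ : Fin N → ℝ} (hξ : (∑ i, ξ i ^ 2) = 1) (i : Fin N) :
    |ξ i| ≤ 1 := by
  have h1 : ξ i ^ 2 ≤ 1 := by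
    rw [← hξ]
    exact Finset.single_le_sum (f := fun j => ξ j ^ 2) (fun j _ => sq_nonneg _)
      (Finset.mem_univ i)
  nlinarith [abs_nonneg (ξ i), sq_abs (ξ i)]

lemma quadform_le_sum (M : Matrix (Fin N) (Fin N) ℝ) {ξ : Fin N → ℝ}
    (hξ : (∑ i, ξ i ^ 2) = 1) :
    ξ ⬝ᵥ M.mulVec ξ ≤ ∑ i, ∑ j, |M i j| := by
  rw [dotProduct]
  simp_rw [mulVec, dotProduct, Finset.mul_sum]
  refine Finset.sum_le_sum fun i _ => Finset.sum_le_sum fun j _ => ?_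
  calc ξ i * (M i j * ξ j) ≤ |ξ i * (M i j * ξ j)| := le_abs_self _
    _ = |ξ i| * |M i j| * |ξ j| := by rw [abs_mul, abs_mul]; ring
    _ ≤ 1 * |M i j| * 1 := by
        have h1 := abs_le_one_of_unit hξ i
        have h2 := abs_le_one_of_unit hξ j
        gcongr <;> positivity
    _ = |M i j| := by ring

lemma bddAbove_set (M : Matrix (Fin N) (Fin N) ℝ) :
    BddAbove {x : ℝ | ∃ ξ : Fin N → ℝ, (∑ i, ξ i ^ 2) = 1 ∧ x = ξ ⬝ᵥ M.mulVec ξ} := by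
  refine ⟨∑ i, ∑ j, |M i j|, ?_⟩
  rintro x ⟨ξ, hξ, rfl⟩
  exact quadform_le_sum M hξ

lemma sum_sq_single (i : Fin N) : (∑ k, (Pi.single i 1 : Fin N → ℝ) k ^ 2) = 1 := by
  simp [Pi.single_apply]

lemma le_lamMax (M : Matrix (Fin N) (Fin N) ℝ) {ξ : Fin N → ℝ}
    (hξ : (∑ i, ξ i ^ 2) = 1) : ξ ⬝ᵥ M.mulVec ξ ≤ lamMax M :=
  le_csSup (bddAbove_set M) ⟨ξ, hξ, rfl⟩

lemma lamMax_le (hN : 1 ≤ N) (M : Matrix (Fin N) (Fin N) ℝ) {c : ℝ}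
    (h : ∀ ξ : Fin N → ℝ, (∑ i, ξ i ^ 2) = 1 → ξ ⬝ᵥ M.mulVec ξ ≤ c) :
    lamMax M ≤ c := by
  apply csSup_le
  · exact ⟨_, Pi.single ⟨0, hN⟩ 1, sum_sq_single _, rfl⟩
  · rintro x ⟨ξ, hξ, rfl⟩; exact h ξ hξ

lemma quad_single (M : Matrix (Fin N) (Fin N) ℝ) (i : Fin N) :
    (Pi.single i 1 : Fin N → ℝ) ⬝ᵥ M.mulVec (Pi.single i 1) = M i i := by
  simp

lemma sum_sq_two {i j : Fin N} (hij : i ≠ j) (a b : ℝ) :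
    (∑ k, (a • (Pi.single i 1 : Fin N → ℝ) + b • (Pi.single j 1 : Fin N → ℝ)) k ^ 2)
      = a ^ 2 + b ^ 2 := by
  set ξ : Fin N → ℝ := a • (Pi.single i 1 : Fin N → ℝ) + b • (Pi.single j 1 : Fin N → ℝ)
    with hξdef
  have h : (∑ k, ξ k ^ 2) = ξ ⬝ᵥ ξ := by
    simp [dotProduct, sq]
  rw [h, hξdef]
  simp only [add_dotProduct, dotProduct_add, smul_dotProduct, dotProduct_smul,
    single_dotProduct, dotProduct_single, Pi.add_apply, Pi.smul_apply,
    Pi.single_apply, smul_eq_mul]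
  simp [hij, hij.symm]
  ring

lemma quad_two (M : Matrix (Fin N) (Fin N) ℝ) {i j : Fin N} (hij : i ≠ j) (a b : ℝ) :
    (a • (Pi.single i 1 : Fin N → ℝ) + b • (Pi.single j 1 : Fin N → ℝ)) ⬝ᵥ
      M.mulVec (a • (Pi.single i 1 : Fin N → ℝ) + b • (Pi.single j 1 : Fin N → ℝ))
    = a * a * M i i + a * b * M i j + b * a * M j i + b * b * M j j := by
  simp only [mulVec_add, mulVec_smul, add_dotProduct, dotProduct_add, smul_dotProduct,
    dotProduct_smul, single_dotProduct, mulVec_single, smul_eq_mul, Pi.single_apply,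
    Pi.add_apply, Pi.smul_apply]
  simp [hij, hij.symm]
  ring

lemma quad_decomp (w : Fin N → ℝ) (H : Matrix (Fin N) (Fin N) ℝ) (ξ : Fin N → ℝ) :
    ξ ⬝ᵥ (vecMulVec w w - H).mulVec ξ = (ξ ⬝ᵥ w) ^ 2 - ξ ⬝ᵥ H.mulVec ξ := by
  rw [sub_mulVec, dotProduct_sub]
  congr 1
  have h : (ξ ⬝ᵥ w) ^ 2 = ∑ i, ∑ j, (ξ i * w i) * (ξ j * w j) := by
    rw [sq, dotProduct, Finset.sum_mul_sum]
  rw [h]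
  simp only [dotProduct, mulVec, vecMulVec_apply, Finset.mul_sum]
  exact Finset.sum_congr rfl fun i _ => Finset.sum_congr rfl fun j _ => by ring

lemma quad_lin (H₁ H₂ : Matrix (Fin N) (Fin N) ℝ) (a b : ℝ) (ξ : Fin N → ℝ) :
    ξ ⬝ᵥ (a • H₁ + b • H₂).mulVec ξ
      = a * (ξ ⬝ᵥ H₁.mulVec ξ) + b * (ξ ⬝ᵥ H₂.mulVec ξ) := by
  simp [add_mulVec, smul_mulVec, dotProduct_add, dotProduct_smul, smul_eq_mul]

end LamMaxAux

set_option maxHeartbeats 2000000 in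
theorem stmt2 (N : ℕ) (hN : 1 ≤ N) (e : ℝ) (he : 0 < e) :
    let S : Set ((Fin N → ℝ) × (tracelessSym N)) :=
      {p | (N : ℝ) / 2 * lamMax (vecMulVec p.1 p.1 - (p.2 : Matrix (Fin N) (Fin N) ℝ)) < e}
    Convex ℝ S ∧ IsOpen S ∧
      ∃ C : ℝ, ∀ p ∈ S, (∀ i, |p.1 i| ≤ C) ∧
        ∀ i j, |(p.2 : Matrix (Fin N) (Fin N) ℝ) i j| ≤ C := by
  intro S
  have : NeZero N := ⟨by omega⟩
  have hNR : (1:ℝ) ≤ (N:ℝ) := by exact_mod_cast hN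
  have hNpos : (0:ℝ) < (N:ℝ) := by linarith
  have h2eN : 2*e/(N:ℝ) ≤ 2*e := by
    rw [div_le_iff₀ hNpos]; nlinarith
  have h2eNpos : 0 < 2*e/(N:ℝ) := by positivity
  refine ⟨?_, ?_, ?_⟩
  · -- Convexity
    intro p hp q hq a b ha hb hab
    have hp' : (N:ℝ)/2 * lamMax (vecMulVec p.1 p.1 - (p.2 : Matrix (Fin N) (Fin N) ℝ)) < e := hp
    have hq' : (N:ℝ)/2 * lamMax (vecMulVec q.1 q.1 - (q.2 : Matrix (Fin N) (Fin N) ℝ)) < e := hq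
    show (N:ℝ)/2 * lamMax (vecMulVec (a • p + b • q).1 (a • p + b • q).1
        - (((a • p + b • q).2 : tracelessSym N) : Matrix (Fin N) (Fin N) ℝ)) < e
    have hfst : (a • p + b • q).1 = a • p.1 + b • q.1 := rfl
    have hsnd : (((a • p + b • q).2 : tracelessSym N) : Matrix (Fin N) (Fin N) ℝ)
        = a • (p.2 : Matrix (Fin N) (Fin N) ℝ) + b • (q.2 : Matrix (Fin N) (Fin N) ℝ) := rfl
    rw [hfst, hsnd]
    set X := lamMax (vecMulVec p.1 p.1 - (p.2 : Matrix (Fin N) (Fin N) ℝ)) with hX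
    set Y := lamMax (vecMulVec q.1 q.1 - (q.2 : Matrix (Fin N) (Fin N) ℝ)) with hY
    have key : lamMax (vecMulVec (a • p.1 + b • q.1) (a • p.1 + b • q.1)
        - (a • (p.2 : Matrix (Fin N) (Fin N) ℝ) + b • (q.2 : Matrix (Fin N) (Fin N) ℝ)))
        ≤ a * X + b * Y := by
      apply LamMaxAux.lamMax_le hN
      intro ξ hξ
      have e1 : ξ ⬝ᵥ (vecMulVec p.1 p.1 - (p.2 : Matrix (Fin N) (Fin N) ℝ)).mulVec ξ ≤ X :=
        LamMaxAux.le_lamMax _ hξ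
      have e2 : ξ ⬝ᵥ (vecMulVec q.1 q.1 - (q.2 : Matrix (Fin N) (Fin N) ℝ)).mulVec ξ ≤ Y :=
        LamMaxAux.le_lamMax _ hξ
      rw [LamMaxAux.quad_decomp] at e1 e2
      rw [LamMaxAux.quad_decomp, LamMaxAux.quad_lin, dotProduct_add, dotProduct_smul,
        dotProduct_smul, smul_eq_mul, smul_eq_mul]
      set s := ξ ⬝ᵥ p.1
      set t := ξ ⬝ᵥ q.1
      set u := ξ ⬝ᵥ (p.2 : Matrix (Fin N) (Fin N) ℝ).mulVec ξ
      set v := ξ ⬝ᵥ (q.2 : Matrix (Fin N) (Fin N) ℝ).mulVec ξ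
      nlinarith [sq_nonneg (s - t), mul_nonneg ha hb,
        mul_le_mul_of_nonneg_left e1 ha, mul_le_mul_of_nonneg_left e2 hb]
    rcases eq_or_lt_of_le ha with h0 | hapos
    · have hb1 : b = 1 := by linarith
      have hcomb : a * X + b * Y = Y := by rw [← h0, hb1]; ring
      have h3 := mul_le_mul_of_nonneg_left key (by positivity : (0:ℝ) ≤ (N:ℝ)/2)
      rw [hcomb] at h3
      exact lt_of_le_of_lt h3 hq'
    · have h1 : a * ((N:ℝ)/2 * X) < a * e := mul_lt_mul_of_pos_left hp' hapos
      have h2 : b * ((N:ℝ)/2 * Y) ≤ b * e := mul_le_mul_of_nonneg_left hq'.le hb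
      have h3 : (N:ℝ)/2 * lamMax (vecMulVec (a • p.1 + b • q.1) (a • p.1 + b • q.1)
          - (a • (p.2 : Matrix (Fin N) (Fin N) ℝ) + b • (q.2 : Matrix (Fin N) (Fin N) ℝ)))
          ≤ (N:ℝ)/2 * (a * X + b * Y) :=
        mul_le_mul_of_nonneg_left key (by positivity)
      nlinarith [h1, h2, h3]
  · -- Openness
    rw [isOpen_iff_mem_nhds]
    intro p0 hp0
    have hp0' : (N:ℝ)/2 * lamMax (vecMulVec p0.1 p0.1
        - (p0.2 : Matrix (Fin N) (Fin N) ℝ)) < e := hp0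
    set A0 := vecMulVec p0.1 p0.1 - (p0.2 : Matrix (Fin N) (Fin N) ℝ) with hA0
    set g : ((Fin N → ℝ) × tracelessSym N) → ℝ := fun p =>
      ∑ i, ∑ j, |(vecMulVec p.1 p.1 - (p.2 : Matrix (Fin N) (Fin N) ℝ)) i j - A0 i j| with hg
    have hgcont : Continuous g := by
      apply continuous_finset_sum
      intro i _
      apply continuous_finset_sum
      intro j _
      apply Continuous.abs
      have hw : ∀ k, Continuous fun p : (Fin N → ℝ) × tracelessSym N => p.1 k :=
        fun k => (continuous_apply k).comp continuous_fst
      have hH : Continuous fun p : (Fin N → ℝ) × tracelessSym N =>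
          (p.2 : Matrix (Fin N) (Fin N) ℝ) i j :=
        (continuous_apply j).comp ((continuous_apply i).comp
          ((continuous_subtype_val (p := (· ∈ tracelessSym N))).comp continuous_snd))
      show Continuous fun p : (Fin N → ℝ) × tracelessSym N =>
        p.1 i * p.1 j - (p.2 : Matrix (Fin N) (Fin N) ℝ) i j - A0 i j
      exact (((hw i).mul (hw j)).sub hH).sub continuous_const
    have key : ∀ p : (Fin N → ℝ) × tracelessSym N,
        lamMax (vecMulVec p.1 p.1 - (p.2 : Matrix (Fin N) (Fin N) ℝ)) ≤ lamMax A0 + g p := by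
      intro p
      apply LamMaxAux.lamMax_le hN
      intro ξ hξ
      set Ap := vecMulVec p.1 p.1 - (p.2 : Matrix (Fin N) (Fin N) ℝ) with hAp
      have h1 : ξ ⬝ᵥ Ap.mulVec ξ = ξ ⬝ᵥ A0.mulVec ξ + ξ ⬝ᵥ (Ap - A0).mulVec ξ := by
        simp only [hAp, hA0, sub_mulVec, dotProduct_sub]; ring
      have h2 : ξ ⬝ᵥ A0.mulVec ξ ≤ lamMax A0 := LamMaxAux.le_lamMax _ hξ
      have h3 : ξ ⬝ᵥ (Ap - A0).mulVec ξ ≤ ∑ i, ∑ j, |(Ap - A0) i j| :=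
        LamMaxAux.quadform_le_sum _ hξ
      have h4 : (∑ i, ∑ j, |(Ap - A0) i j|) = g p := by
        simp [hg, hAp, Matrix.sub_apply]
      rw [h1]
      rw [h4] at h3
      linarith
    refine mem_nhds_iff.mpr
      ⟨{p | (N:ℝ)/2 * (lamMax A0 + g p) < e}, ?_, ?_, ?_⟩
    · intro p hp
      have h5 : (N:ℝ)/2 * lamMax (vecMulVec p.1 p.1 - (p.2 : Matrix (Fin N) (Fin N) ℝ))
          ≤ (N:ℝ)/2 * (lamMax A0 + g p) :=
        mul_le_mul_of_nonneg_left (key p) (by positivity)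
      have hp' : (N:ℝ)/2 * (lamMax A0 + g p) < e := hp
      exact lt_of_le_of_lt h5 hp'
    · show IsOpen ((fun p => (N:ℝ)/2 * (lamMax A0 + g p)) ⁻¹' Set.Iio e)
      exact (continuous_const.mul (continuous_const.add hgcont)).isOpen_preimage _ isOpen_Iio
    · show (N:ℝ)/2 * (lamMax A0 + g p0) < e
      have hg0 : g p0 = 0 := by simp [hg, hA0]
      rw [hg0, add_zero]
      exact hp0'
  · -- Boundedness
    refine ⟨Real.sqrt (2*e) + 6*e, ?_⟩
    rintro ⟨w, H⟩ hp
    set Hm : Matrix (Fin N) (Fin N) ℝ := (H : Matrix (Fin N) (Fin N) ℝ) with hHm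
    have hp' : (N:ℝ)/2 * lamMax (vecMulVec w w - Hm) < e := hp
    have hlam : lamMax (vecMulVec w w - Hm) < 2*e/(N:ℝ) := by
      rw [lt_div_iff₀ hNpos]; nlinarith
    have hMapp : ∀ k l, (vecMulVec w w - Hm) k l = w k * w l - Hm k l := by
      intro k l; simp [Matrix.sub_apply, Matrix.vecMulVec_apply]
    have htr : (∑ i, Hm i i) = 0 := by
      have := H.2.2
      simpa [Matrix.trace, Matrix.diag] using this
    have hsym : ∀ i j, Hm j i = Hm i j := fun i j => H.2.1.apply i j
    have key1 : ∀ i, w i ^ 2 - Hm i i < 2*e/(N:ℝ) := by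
      intro i
      have h := LamMaxAux.le_lamMax (vecMulVec w w - Hm) (LamMaxAux.sum_sq_single i)
      rw [LamMaxAux.quad_single, hMapp] at h
      have := h.trans_lt hlam
      nlinarith [this]
    have hsum : (∑ i, w i ^ 2) < 2*e := by
      have h1 : (∑ i, (w i ^ 2 - Hm i i)) < ∑ _i : Fin N, 2*e/(N:ℝ) :=
        Finset.sum_lt_sum_of_nonempty Finset.univ_nonempty fun i _ => key1 i
      have h2 : (∑ _i : Fin N, 2*e/(N:ℝ)) = 2*e := by
        rw [Finset.sum_const, Finset.card_univ, Fintype.card_fin, nsmul_eq_mul]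
        field_simp
      rw [Finset.sum_sub_distrib, htr, sub_zero] at h1
      linarith
    have hw2 : ∀ i, w i ^ 2 ≤ 2*e := fun i =>
      le_of_lt (lt_of_le_of_lt
        (Finset.single_le_sum (f := fun j => w j ^ 2) (fun j _ => sq_nonneg _)
          (Finset.mem_univ i)) hsum)
    have hHd_lb : ∀ i, -(2*e/(N:ℝ)) < Hm i i := by
      intro i; nlinarith [key1 i, sq_nonneg (w i)]
    have hHd_ub : ∀ i, Hm i i ≤ 2*e := by
      intro i
      have hsplit : Hm i i + ∑ j ∈ Finset.univ.erase i, Hm j j = 0 := by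
        rw [← htr]
        exact Finset.add_sum_erase _ (fun j => Hm j j) (Finset.mem_univ i)
      have hlow : (∑ _j ∈ Finset.univ.erase i, (-(2*e/(N:ℝ))))
          ≤ ∑ j ∈ Finset.univ.erase i, Hm j j :=
        Finset.sum_le_sum fun j _ => (hHd_lb j).le
      rw [Finset.sum_const, nsmul_eq_mul] at hlow
      have hcard : (((Finset.univ.erase i).card : ℕ) : ℝ) ≤ (N:ℝ) := by
        have : (Finset.univ.erase i).card ≤ N := by
          calc (Finset.univ.erase i).card ≤ Finset.univ.card := Finset.card_erase_le.trans le_rfl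
            _ = N := by simp
        exact_mod_cast this
      have hNid : (N:ℝ) * (2*e/(N:ℝ)) = 2*e := by field_simp
      have hprod : (((Finset.univ.erase i).card : ℕ) : ℝ) * (2*e/(N:ℝ))
          ≤ (N:ℝ) * (2*e/(N:ℝ)) :=
        mul_le_mul_of_nonneg_right hcard h2eNpos.le
      linarith [hlow, hsplit, hprod, hNid]
    have hww : ∀ i j, w i * w j ≤ 2*e ∧ -(2*e) ≤ w i * w j := by
      intro i j
      constructor
      · nlinarith [hw2 i, hw2 j, sq_nonneg (w i - w j)]
      · nlinarith [hw2 i, hw2 j, sq_nonneg (w i + w j)]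
    have hoff : ∀ i j, i ≠ j → |Hm i j| ≤ 6*e := by
      intro i j hij
      set a : ℝ := (Real.sqrt 2)⁻¹ with hadef
      have ha2 : a ^ 2 = 1/2 := by
        rw [hadef, inv_pow, Real.sq_sqrt (by norm_num : (0:ℝ) ≤ 2)]; norm_num
      have hunit1 : (∑ k, (a • (Pi.single i 1 : Fin N → ℝ)
          + a • (Pi.single j 1 : Fin N → ℝ)) k ^ 2) = 1 := by
        rw [LamMaxAux.sum_sq_two hij, ha2]; norm_num
      have hunit2 : (∑ k, (a • (Pi.single i 1 : Fin N → ℝ)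
          + (-a) • (Pi.single j 1 : Fin N → ℝ)) k ^ 2) = 1 := by
        rw [LamMaxAux.sum_sq_two hij]
        have : (-a) ^ 2 = a ^ 2 := by ring
        rw [this, ha2]; norm_num
      have q1 := (LamMaxAux.le_lamMax (vecMulVec w w - Hm) hunit1).trans_lt hlam
      have q2 := (LamMaxAux.le_lamMax (vecMulVec w w - Hm) hunit2).trans_lt hlam
      rw [LamMaxAux.quad_two _ hij] at q1 q2
      rw [hMapp i i, hMapp i j, hMapp j i, hMapp j j] at q1 q2
      have haa : a * a = 1/2 := by nlinarith [ha2]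
      have hs := hsym i j
      have hub := hHd_ub i
      have hub' := hHd_ub j
      have hwwij := hww i j
      rw [abs_le]
      constructor
      · nlinarith [q2, sq_nonneg (w i), sq_nonneg (w j)]
      · nlinarith [q1, sq_nonneg (w i), sq_nonneg (w j)]
    have hsqrtnn : 0 ≤ Real.sqrt (2*e) := Real.sqrt_nonneg _
    refine ⟨fun i => ?_, fun i j => ?_⟩
    · have h1 : |w i| ≤ Real.sqrt (2*e) := by
        rw [← Real.sqrt_sq_eq_abs]
        exact Real.sqrt_le_sqrt (hw2 i)
      linarith
    · show |Hm i j| ≤ Real.sqrt (2*e) + 6*e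
      rcases eq_or_ne i j with rfl | hij
      · have hlb : -(2*e) ≤ Hm i i := by
          have := hHd_lb i
          linarith
        have hub := hHd_ub i
        rw [abs_le]
        constructor <;> linarith
      · have := hoff i j hij
        linarith
end
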